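/- Let f : 𝕋 → ℝ be continuous, even, with mean value zero, with Fourier coefficients satisfying f̂(k) ≥ 0 for all k ≠ 0 and ∑_{k∈ℤ} f̂(k) < ∞. Then for any points x_1, …, x_n ∈ 𝕋, sup_{x∈𝕋} |∑_{ℓ=1}^{n} f(x − x_ℓ)| ≤ f(0)^{1/2} · (∑_{m=1}^{n} ∑_{ℓ=1}^{n} f(x_m − x_ℓ))^{1/2}. -/

import Mathlib

open MeasureTheory Filter

/-- For continuous even mean-zero `f : 𝕋 → ℝ` with summable Fourier
coefficients satisfying `f̂(k) ≥ 0` for `k ≠ 0`, and any points `x_1, …, x_n ∈ 𝕋`,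
`sup_x |∑_{ℓ=1}^{n} f(x − x_ℓ)| ≤ f(0)^{1/2} · (∑_{m=1}^{n} ∑_{ℓ=1}^{n} f(x_m − x_ℓ))^{1/2}`. -/
theorem sup_le_sqrt_energy
    (f : UnitAddCircle → ℝ) (hf_cont : Continuous f)
    (hf_even : ∀ t : UnitAddCircle, f (-t) = f t)
    (hf_mean : (∫ t : UnitAddCircle, f t) = 0)
    (hf_sum : Summable fun k : ℤ => ‖fourierCoeff (fun t => (f t : ℂ)) k‖)
    (hf_pos : ∀ k : ℤ, k ≠ 0 → 0 ≤ (fourierCoeff (fun t => (f t : ℂ)) k).re)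
    (n : ℕ) (x : ℕ → UnitAddCircle) :
    ∀ y : UnitAddCircle,
      |∑ l ∈ Finset.Icc 1 n, f (y - x l)|
        ≤ Real.sqrt (f 0) *
          Real.sqrt (∑ m ∈ Finset.Icc 1 n, ∑ l ∈ Finset.Icc 1 n, f (x m - x l)) := by
  intro y
  set c : ℤ → ℂ := fourierCoeff (fun t : UnitAddCircle => (f t : ℂ)) with hcdef
  have hcont : Continuous fun t : UnitAddCircle => (f t : ℂ) :=
    Complex.continuous_ofReal.comp hf_cont
  have hsum : Summable c := Summable.of_norm hf_sum
  have hF : ∀ t : UnitAddCircle, HasSum (fun k : ℤ => c k * fourier k t) ((f t : ℂ)) := by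
    intro t
    simpa [smul_eq_mul] using has_pointwise_sum_fourier_series_of_summable
      (f := ⟨fun t : UnitAddCircle => (f t : ℂ), hcont⟩) hsum t
  have hfneg : ∀ (k : ℤ) (t : UnitAddCircle),
      fourier k (-t) = (starRingEnd ℂ) (fourier k t) := by
    intro k t
    rw [← fourier_neg, fourier_apply, fourier_apply, neg_smul, smul_neg]
  have hfadd : ∀ (k : ℤ) (s t : UnitAddCircle),
      fourier k (s + t) = fourier k s * fourier k t := by
    intro k s t
    rw [fourier_apply, fourier_apply, fourier_apply, smul_add, AddCircle.toCircle_add,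
      Circle.coe_mul]
  have hconj : ∀ k : ℤ, (starRingEnd ℂ) (c k) = c (-k) := by
    intro k
    simp only [hcdef, fourierCoeff, smul_eq_mul, neg_neg]
    rw [← integral_conj]
    congr 1
    funext t
    rw [map_mul, ← fourier_neg, neg_neg, Complex.conj_ofReal]
  have heven : ∀ k : ℤ, c (-k) = c k := by
    intro k
    simp only [hcdef, fourierCoeff, smul_eq_mul, neg_neg]
    rw [← integral_neg_eq_self
      (fun t : UnitAddCircle => fourier (-k) t * ((f t : ℂ))) AddCircle.haarAddCircle]
    congr 1
    funext t
    rw [hfneg, ← fourier_neg, neg_neg, hf_even]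
  have hreal : ∀ k : ℤ, c k = ((c k).re : ℂ) := by
    intro k
    exact (Complex.conj_eq_iff_re.mp ((hconj k).trans (heven k))).symm
  have hzero : c 0 = 0 := by
    have hvol : (∫ t : UnitAddCircle, f t ∂AddCircle.haarAddCircle) = 0 := by
      rw [AddCircle.volume_eq_smul_haarAddCircle] at hf_mean
      simpa using hf_mean
    simp only [hcdef, fourierCoeff, neg_zero, fourier_zero, one_smul]
    have h := integral_ofReal (𝕜 := ℂ) (f := f) (μ := AddCircle.haarAddCircle)
    exact h.trans (by rw [hvol]; simp)
  set r : ℤ → ℝ := fun k => (c k).re with hrdef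
  have hrnn : ∀ k : ℤ, 0 ≤ r k := by
    intro k
    rcases eq_or_ne k 0 with rfl | hk
    · simp [hrdef, hzero]
    · exact hf_pos k hk
  have hnorm : ∀ k : ℤ, ‖c k‖ = r k := by
    intro k
    rw [hreal k, Complex.norm_real, Real.norm_eq_abs, abs_of_nonneg (hrnn k)]
  have hrsum : Summable r := by
    have : r = fun k => ‖c k‖ := funext fun k => (hnorm k).symm
    rw [this]; exact hf_sum
  set T : ℤ → ℂ := fun k => ∑ l ∈ Finset.Icc 1 n, fourier k (x l) with hTdef
  have hTk : ∀ k : ℤ, (∑ l ∈ Finset.Icc 1 n, fourier k (x l)) = T k := fun _ => rfl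
  have hTb : ∀ k : ℤ, ‖T k‖ ≤ n := by
    intro k
    refine (norm_sum_le _ _).trans ?_
    simp [fourier_apply, Circle.norm_coe]
  -- pointwise sum at y
  have hSy : HasSum (fun k : ℤ => c k * (fourier k y * (starRingEnd ℂ) (T k)))
      ((∑ l ∈ Finset.Icc 1 n, f (y - x l) : ℝ) : ℂ) := by
    have h1 : HasSum (fun k : ℤ => ∑ l ∈ Finset.Icc 1 n, c k * fourier k (y - x l))
        (∑ l ∈ Finset.Icc 1 n, ((f (y - x l) : ℂ))) :=
      hasSum_sum fun l _ => hF (y - x l)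
    rw [Complex.ofReal_sum]
    have h2 : (fun k : ℤ => c k * (fourier k y * (starRingEnd ℂ) (T k)))
        = fun k : ℤ => ∑ l ∈ Finset.Icc 1 n, c k * fourier k (y - x l) := by
      funext k
      rw [← hTk k, map_sum, Finset.mul_sum, Finset.mul_sum]
      refine Finset.sum_congr rfl fun l _ => ?_
      rw [sub_eq_add_neg, hfadd, hfneg]
    rw [h2]
    exact h1
  -- energy identity
  have hE : HasSum (fun k : ℤ => r k * ‖T k‖ ^ 2)
      (∑ m ∈ Finset.Icc 1 n, ∑ l ∈ Finset.Icc 1 n, f (x m - x l)) := by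
    rw [← Complex.hasSum_ofReal]
    have h1 : HasSum
        (fun k : ℤ => ∑ m ∈ Finset.Icc 1 n, ∑ l ∈ Finset.Icc 1 n, c k * fourier k (x m - x l))
        (∑ m ∈ Finset.Icc 1 n, ∑ l ∈ Finset.Icc 1 n, ((f (x m - x l) : ℂ))) :=
      hasSum_sum fun m _ => hasSum_sum fun l _ => hF (x m - x l)
    simp only [Complex.ofReal_sum]
    have h3 : (fun k : ℤ => ((r k * ‖T k‖ ^ 2 : ℝ) : ℂ))
        = fun k : ℤ => ∑ m ∈ Finset.Icc 1 n, ∑ l ∈ Finset.Icc 1 n,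
            c k * fourier k (x m - x l) := by
      funext k
      have h2 : ∀ m ∈ Finset.Icc 1 n, ∑ l ∈ Finset.Icc 1 n, c k * fourier k (x m - x l)
          = c k * fourier k (x m) * (starRingEnd ℂ) (T k) := by
        intro m _
        rw [← hTk k, map_sum, Finset.mul_sum]
        refine Finset.sum_congr rfl fun l _ => ?_
        rw [sub_eq_add_neg, hfadd, hfneg]
        ring
      rw [Finset.sum_congr rfl h2, ← Finset.sum_mul, ← Finset.mul_sum, hTk k,
        mul_assoc, Complex.mul_conj']
      rw [hreal k]
      push_cast
      ring
    rw [h3]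
    exact h1
  -- value at 0
  have hf0 : HasSum r (f 0) := by
    have h0 := hF 0
    simp only [fourier_eval_zero, mul_one] at h0
    rw [← Complex.hasSum_ofReal]
    convert h0 using 2 with k
    exact (hreal k).symm
  have hf0nn : 0 ≤ f 0 := hf0.tsum_eq ▸ tsum_nonneg hrnn
  have hEnn : 0 ≤ ∑ m ∈ Finset.Icc 1 n, ∑ l ∈ Finset.Icc 1 n, f (x m - x l) :=
    hE.tsum_eq ▸ tsum_nonneg fun k => mul_nonneg (hrnn k) (sq_nonneg _)
  -- summability of r k * ‖T k‖
  have hsum1 : Summable fun k : ℤ => r k * ‖T k‖ := by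
    refine Summable.of_nonneg_of_le (fun k => mul_nonneg (hrnn k) (norm_nonneg _))
      (fun k => ?_) (hrsum.mul_right (n : ℝ))
    exact mul_le_mul_of_nonneg_left (hTb k) (hrnn k)
  -- bound |S y| by the tsum
  have hb1 : |∑ l ∈ Finset.Icc 1 n, f (y - x l)| ≤ ∑' k : ℤ, r k * ‖T k‖ := by
    calc |∑ l ∈ Finset.Icc 1 n, f (y - x l)|
        = ‖((∑ l ∈ Finset.Icc 1 n, f (y - x l) : ℝ) : ℂ)‖ := by
          rw [Complex.norm_real, Real.norm_eq_abs]
      _ = ‖∑' k : ℤ, c k * (fourier k y * (starRingEnd ℂ) (T k))‖ := by rw [hSy.tsum_eq]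
      _ ≤ ∑' k : ℤ, ‖c k * (fourier k y * (starRingEnd ℂ) (T k))‖ := by
          refine norm_tsum_le_tsum_norm ?_
          refine Summable.of_nonneg_of_le (fun k => norm_nonneg _) (fun k => ?_)
            (hrsum.mul_right (n : ℝ))
          rw [norm_mul, norm_mul, RingHomIsometric.norm_map]
          have h1 : ‖(fourier k) y‖ = 1 := by simp [fourier_apply, Circle.norm_coe]
          rw [h1, one_mul, hnorm]
          exact mul_le_mul_of_nonneg_left (hTb k) (hrnn k)
      _ = ∑' k : ℤ, r k * ‖T k‖ := by
          congr 1
          funext k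
          rw [norm_mul, norm_mul, RingHomIsometric.norm_map]
          have h1 : ‖(fourier k) y‖ = 1 := by simp [fourier_apply, Circle.norm_coe]
          rw [h1, one_mul, hnorm]
  -- Cauchy–Schwarz
  have hb2 : (∑' k : ℤ, r k * ‖T k‖) ≤ Real.sqrt (f 0) *
      Real.sqrt (∑ m ∈ Finset.Icc 1 n, ∑ l ∈ Finset.Icc 1 n, f (x m - x l)) := by
    refine Summable.tsum_le_of_sum_le hsum1 fun s => ?_
    have hcs : (∑ k ∈ s, r k * ‖T k‖) ≤
        Real.sqrt (∑ k ∈ s, r k) * Real.sqrt (∑ k ∈ s, r k * ‖T k‖ ^ 2) := by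
      have h := Real.sum_mul_le_sqrt_mul_sqrt s (fun k => Real.sqrt (r k))
        (fun k => Real.sqrt (r k) * ‖T k‖)
      have e1 : ∀ k ∈ s, Real.sqrt (r k) * (Real.sqrt (r k) * ‖T k‖) = r k * ‖T k‖ := by
        intro k _
        rw [← mul_assoc, Real.mul_self_sqrt (hrnn k)]
      have e2 : ∀ k ∈ s, Real.sqrt (r k) ^ 2 = r k := fun k _ => Real.sq_sqrt (hrnn k)
      have e3 : ∀ k ∈ s, (Real.sqrt (r k) * ‖T k‖) ^ 2 = r k * ‖T k‖ ^ 2 := by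
        intro k _
        rw [mul_pow, Real.sq_sqrt (hrnn k)]
      rwa [Finset.sum_congr rfl e1, Finset.sum_congr rfl e2, Finset.sum_congr rfl e3] at h
    refine hcs.trans (mul_le_mul ?_ ?_ (Real.sqrt_nonneg _) (Real.sqrt_nonneg _))
    · refine Real.sqrt_le_sqrt ?_
      rw [← hf0.tsum_eq]
      exact Summable.sum_le_tsum s (fun k _ => hrnn k) hrsum
    · refine Real.sqrt_le_sqrt ?_
      rw [← hE.tsum_eq]
      exact Summable.sum_le_tsum s (fun k _ => mul_nonneg (hrnn k) (sq_nonneg _)) hE.summable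
  exact hb1.trans hb2
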